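/- For each λ ∈ ℝ and each continuous g : [0,T] → ℂ, there exists a unique C¹ function θ : [0,T] → ℂ with θ(0) = 0 satisfying θ'(t) + ∫ₜ^T e^{−iλ(s−t)}(θ(s) − iλ θ'(s)) ds = g(t) for all t ∈ [0,T]. -/

import Mathlib

open intervalIntegral Set

private lemma aux_expD (r : ℂ) (t : ℝ) :
    HasDerivAt (fun s : ℝ => Complex.exp (r * s)) (r * Complex.exp (r * t)) t := by
  have h : HasDerivAt (fun z : ℂ => Complex.exp (r * z)) (r * Complex.exp (r * (t : ℂ))) (t : ℂ) := by
    have := (Complex.hasDerivAt_exp (r * (t:ℂ))).comp (t : ℂ)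
      ((hasDerivAt_id ((t:ℝ) : ℂ)).const_mul r)
    simpa [mul_comm, Function.comp_def] using this
  exact h.comp_ofReal

private lemma aux_expC (r : ℂ) : Continuous fun s : ℝ => Complex.exp (r * s) :=
  Complex.continuous_exp.comp (continuous_const.mul Complex.continuous_ofReal)

private lemma aux_ftc_right {f : ℝ → ℂ} (hf : Continuous f) (a t : ℝ) :
    HasDerivAt (fun u : ℝ => ∫ s in a..u, f s) (f t) t :=
  intervalIntegral.integral_hasDerivAt_right (hf.intervalIntegrable a t)
    (hf.stronglyMeasurableAtFilter _ _) hf.continuousAt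

private lemma aux_ftc_left {f : ℝ → ℂ} (hf : Continuous f) (b t : ℝ) :
    HasDerivAt (fun u : ℝ => ∫ s in u..b, f s) (-(f t)) t := by
  have h : (fun u : ℝ => ∫ s in u..b, f s) = fun u => -∫ s in b..u, f s :=
    funext fun u => intervalIntegral.integral_symm b u
  exact h ▸ (aux_ftc_right hf b t).neg

private lemma aux_factor (r : ℂ) (v : ℝ → ℂ) (t R : ℝ) :
    (∫ s in t..R, Complex.exp (-(r * ((s : ℂ) - (t : ℂ)))) * v s)
      = Complex.exp (r * t) * ∫ s in t..R, Complex.exp (-r * s) * v s := by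
  rw [← intervalIntegral.integral_const_mul]
  apply intervalIntegral.integral_congr
  intro s _
  show Complex.exp (-(r * ((s : ℂ) - (t : ℂ)))) * v s
      = Complex.exp (r * t) * (Complex.exp (-r * s) * v s)
  rw [← mul_assoc, ← Complex.exp_add]
  congr 2
  ring

private theorem aux_main (T lam : ℝ) (hT : 0 ≤ T) (G : ℝ → ℂ) (hG : Continuous G) :
    ∃ θ : ℝ → ℂ, ContDiff ℝ 1 θ ∧ θ 0 = 0 ∧
      (∀ t ∈ Icc 0 T,
        deriv θ t + (∫ s in t..T, Complex.exp (-(Complex.I * (lam : ℂ) * ((s : ℂ) - (t : ℂ)))) *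
          (θ s - Complex.I * (lam : ℂ) * deriv θ s)) = G t) ∧
      ∀ θ₂ : ℝ → ℂ, ContDiff ℝ 1 θ₂ → θ₂ 0 = 0 →
        (∀ t ∈ Icc 0 T,
          deriv θ₂ t + (∫ s in t..T, Complex.exp (-(Complex.I * (lam : ℂ) * ((s : ℂ) - (t : ℂ)))) *
            (θ₂ s - Complex.I * (lam : ℂ) * deriv θ₂ s)) = G t) →
        ∀ t ∈ Icc 0 T, θ₂ t = θ t := by
  set r : ℂ := Complex.I * (lam : ℂ) with hr_def
  have hEE : ∀ (rr : ℂ) (t : ℝ), Complex.exp (rr * t) * Complex.exp (-rr * t) = 1 := by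
    intro rr t
    rw [← Complex.exp_add, show rr * (t:ℂ) + -rr * t = 0 by ring, Complex.exp_zero]
  have hden : Complex.exp ((1:ℂ) * T) + Complex.exp ((-1:ℂ) * T) ≠ 0 := by
    rw [show ((1:ℂ) * (T:ℂ)) = (((T:ℝ)):ℂ) by ring,
      show ((-1:ℂ) * (T:ℂ)) = (((-T : ℝ)):ℂ) by push_cast; ring,
      ← Complex.ofReal_exp, ← Complex.ofReal_exp, ← Complex.ofReal_add]
    exact Complex.ofReal_ne_zero.mpr (by positivity)
  set A : ℝ → ℂ := fun t => ∫ s in (0:ℝ)..t, Complex.exp ((1:ℂ) * s) * G s with hA_def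
  set B : ℝ → ℂ := fun t => ∫ s in (0:ℝ)..t, Complex.exp ((-1:ℂ) * s) * G s with hB_def
  set c : ℂ :=
    (Complex.exp ((1:ℂ) * T) * (1 - r) * B T - Complex.exp ((-1:ℂ) * T) * (1 + r) * A T)
      / (Complex.exp ((1:ℂ) * T) + Complex.exp ((-1:ℂ) * T)) with hc_def
  set p : ℝ → ℂ := fun t => Complex.exp ((-1:ℂ) * t) * (c + (1 + r) * A t) with hp_def
  set q : ℝ → ℂ := fun t => Complex.exp ((1:ℂ) * t) * (-c + (1 - r) * B t) with hq_def
  set θ : ℝ → ℂ := fun t => (p t + q t) / 2 with hθ_def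
  set Φ : ℝ → ℂ := fun t => (p t - q t) / 2 with hΦ_def
  have hA : ∀ t : ℝ, HasDerivAt A (Complex.exp ((1:ℂ) * t) * G t) t := fun t =>
    aux_ftc_right ((aux_expC 1).mul hG) 0 t
  have hB : ∀ t : ℝ, HasDerivAt B (Complex.exp ((-1:ℂ) * t) * G t) t := fun t =>
    aux_ftc_right ((aux_expC (-1)).mul hG) 0 t
  have hp : ∀ t : ℝ, HasDerivAt p (-(p t) + (1 + r) * G t) t := by
    intro t
    have h1 := (aux_expD (-1) t).mul (((hA t).const_mul (1 + r)).const_add c)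
    refine h1.congr_deriv ?_
    symm
    simp only [hp_def]
    linear_combination (-((1 + r) * G t)) * hEE 1 t
  have hq : ∀ t : ℝ, HasDerivAt q (q t + (1 - r) * G t) t := by
    intro t
    have h1 := (aux_expD 1 t).mul (((hB t).const_mul (1 - r)).const_add (-c))
    refine h1.congr_deriv ?_
    symm
    simp only [hq_def]
    linear_combination (-((1 - r) * G t)) * hEE 1 t
  have hθd : ∀ t : ℝ, HasDerivAt θ (G t - Φ t) t := by
    intro t
    have h1 := ((hp t).add (hq t)).div_const 2
    rw [hθ_def]
    refine h1.congr_deriv ?_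
    symm
    simp only [hΦ_def]
    ring
  have hΦd : ∀ t : ℝ, HasDerivAt Φ (-(θ t) + r * G t) t := by
    intro t
    have h1 := ((hp t).sub (hq t)).div_const 2
    rw [hΦ_def]
    refine h1.congr_deriv ?_
    symm
    simp only [hθ_def]
    ring
  have hderivθ : ∀ t : ℝ, deriv θ t = G t - Φ t := fun t => (hθd t).deriv
  have hθdiff : Differentiable ℝ θ := fun t => (hθd t).differentiableAt
  have hΦdiff : Differentiable ℝ Φ := fun t => (hΦd t).differentiableAt
  have hθcont : Continuous θ := hθdiff.continuous
  have hΦcont : Continuous Φ := hΦdiff.continuous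
  have hθC1 : ContDiff ℝ 1 θ := by
    rw [contDiff_one_iff_deriv]
    refine ⟨hθdiff, ?_⟩
    have hde : deriv θ = fun t => G t - Φ t := funext hderivθ
    rw [hde]
    exact hG.sub hΦcont
  have hθ0 : θ 0 = 0 := by
    have hA0 : A 0 = 0 := intervalIntegral.integral_same
    have hB0 : B 0 = 0 := intervalIntegral.integral_same
    simp only [hθ_def, hp_def, hq_def, hA0, hB0, mul_zero, add_zero, Complex.ofReal_zero,
      Complex.exp_zero, one_mul]
    ring
  have hc_mul : c * (Complex.exp ((1:ℂ) * T) + Complex.exp ((-1:ℂ) * T))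
      = Complex.exp ((1:ℂ) * T) * (1 - r) * B T - Complex.exp ((-1:ℂ) * T) * (1 + r) * A T := by
    rw [hc_def, div_mul_cancel₀ _ hden]
  have hΦT : Φ T = 0 := by
    simp only [hΦ_def, hp_def, hq_def]
    linear_combination hc_mul / 2
  set u : ℝ → ℂ := fun s => θ s - r * (G s - Φ s) with hu_def
  have hucont : Continuous u := by
    rw [hu_def]
    exact hθcont.sub (continuous_const.mul (hG.sub hΦcont))
  have hFd : ∀ t : ℝ, HasDerivAt (fun t : ℝ => Complex.exp (-r * t) * Φ t)
      (-(Complex.exp (-r * t) * u t)) t := by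
    intro t
    have h1 := (aux_expD (-r) t).mul (hΦd t)
    refine h1.congr_deriv ?_
    symm
    simp only [hu_def]
    ring
  have hGid : ∀ t : ℝ, HasDerivAt (fun t : ℝ => ∫ s in t..T, Complex.exp (-r * s) * u s)
      (-(Complex.exp (-r * t) * u t)) t := fun t =>
    aux_ftc_left ((aux_expC (-r)).mul hucont) T t
  have hFG : ∀ t : ℝ, Complex.exp (-r * t) * Φ t = ∫ s in t..T, Complex.exp (-r * s) * u s := by
    have hdiff : Differentiable ℝ
        (fun t : ℝ => Complex.exp (-r * t) * Φ t - ∫ s in t..T, Complex.exp (-r * s) * u s) :=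
      fun t => ((hFd t).sub (hGid t)).differentiableAt
    have hzero : ∀ t : ℝ, deriv (fun t : ℝ => Complex.exp (-r * t) * Φ t
        - ∫ s in t..T, Complex.exp (-r * s) * u s) t = 0 := by
      intro t
      rw [show deriv (fun t : ℝ => Complex.exp (-r * t) * Φ t
          - ∫ s in t..T, Complex.exp (-r * s) * u s) t = _ from ((hFd t).sub (hGid t)).deriv]
      ring
    have hconst := is_const_of_deriv_eq_zero hdiff hzero
    intro t
    have h := hconst t T
    simp only [hΦT, mul_zero, intervalIntegral.integral_same, sub_zero] at h
    exact sub_eq_zero.mp (by simpa using h)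
  have hint : ∀ t : ℝ,
      (∫ s in t..T, Complex.exp (-(r * ((s : ℂ) - (t : ℂ)))) * (θ s - r * deriv θ s)) = Φ t := by
    intro t
    have h1 : (∫ s in t..T, Complex.exp (-(r * ((s : ℂ) - (t : ℂ)))) * (θ s - r * deriv θ s))
        = ∫ s in t..T, Complex.exp (-(r * ((s : ℂ) - (t : ℂ)))) * u s := by
      apply intervalIntegral.integral_congr
      intro s _
      show Complex.exp (-(r * ((s : ℂ) - (t : ℂ)))) * (θ s - r * deriv θ s)
          = Complex.exp (-(r * ((s : ℂ) - (t : ℂ)))) * u s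
      rw [hderivθ s]
    rw [h1, aux_factor r u t T, ← hFG t, ← mul_assoc, hEE r t, one_mul]
  refine ⟨θ, hθC1, hθ0, ?_, ?_⟩
  · intro t _
    rw [hderivθ t, hint t]
    ring
  · intro θ₂ hθ₂C1 hθ₂0 heq t ht
    have hθ₂dc := contDiff_one_iff_deriv.mp hθ₂C1
    set u₂ : ℝ → ℂ := fun s => θ₂ s - r * deriv θ₂ s with hu₂_def
    have hu₂cont : Continuous u₂ := by
      rw [hu₂_def]
      exact hθ₂dc.1.continuous.sub (continuous_const.mul hθ₂dc.2)
    set Φ₂ : ℝ → ℂ :=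
      fun x => Complex.exp (r * x) * ∫ s in x..T, Complex.exp (-r * s) * u₂ s with hΦ₂_def
    have heq' : ∀ x ∈ Icc (0:ℝ) T, deriv θ₂ x = G x - Φ₂ x := by
      intro x hx
      have h := heq x hx
      have h4 : (∫ s in x..T, Complex.exp (-(r * ((s:ℂ) - (x:ℂ)))) * (θ₂ s - r * deriv θ₂ s))
          = ∫ s in x..T, Complex.exp (-(r * ((s:ℂ) - (x:ℂ)))) * u₂ s :=
        intervalIntegral.integral_congr fun s _ => by simp only [hu₂_def]
      have h2 := aux_factor r u₂ x T
      rw [h4, h2] at h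
      simp only [hΦ₂_def]
      linear_combination h
    have hΦ₂d : ∀ x : ℝ, HasDerivAt Φ₂ (r * Φ₂ x - u₂ x) x := by
      intro x
      have h1 := (aux_expD r x).mul (aux_ftc_left ((aux_expC (-r)).mul hu₂cont) T x)
      rw [hΦ₂_def]
      refine h1.congr_deriv ?_
      symm
      simp only [Pi.mul_apply]
      linear_combination (u₂ x) * hEE r x
    have hΦ₂diff : Differentiable ℝ Φ₂ := fun x => (hΦ₂d x).differentiableAt
    have hΦ₂cont : Continuous Φ₂ := hΦ₂diff.continuous
    have hΦ₂T : Φ₂ T = 0 := by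
      simp only [hΦ₂_def, intervalIntegral.integral_same, mul_zero]
    set δ : ℝ → ℂ := fun x => θ₂ x - θ x with hδ_def
    set ψ : ℝ → ℂ := fun x => Φ₂ x - Φ x with hψ_def
    have hδcont : Continuous δ := by
      rw [hδ_def]; exact hθ₂dc.1.continuous.sub hθcont
    have hψcont : Continuous ψ := by
      rw [hψ_def]; exact hΦ₂cont.sub hΦcont
    have hδd : ∀ x ∈ Icc (0:ℝ) T, HasDerivAt δ (-(ψ x)) x := by
      intro x hx
      have h1 := (hθ₂dc.1 x).hasDerivAt.sub (hθd x)
      rw [hδ_def]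
      refine h1.congr_deriv ?_
      symm
      rw [heq' x hx]
      simp only [hψ_def]
      ring
    have hψd : ∀ x ∈ Icc (0:ℝ) T, HasDerivAt ψ (-(δ x)) x := by
      intro x hx
      have h1 := (hΦ₂d x).sub (hΦd x)
      rw [hψ_def]
      refine h1.congr_deriv ?_
      symm
      simp only [hδ_def, hu₂_def]
      rw [heq' x hx]
      ring
    have hRconst : ∀ x ∈ Icc (0:ℝ) T,
        Complex.exp ((1:ℂ) * x) * (δ x + ψ x)
          = Complex.exp ((1:ℂ) * (0:ℝ)) * (δ 0 + ψ 0) := by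
      have hc2 : ContinuousOn (fun x : ℝ => Complex.exp ((1:ℂ) * x) * (δ x + ψ x)) (Icc 0 T) :=
        ((aux_expC 1).mul (hδcont.add hψcont)).continuousOn
      have hd2 : ∀ x ∈ Ico (0:ℝ) T,
          HasDerivWithinAt (fun x : ℝ => Complex.exp ((1:ℂ) * x) * (δ x + ψ x)) 0 (Ici x) x := by
        intro x hx
        have hx' : x ∈ Icc (0:ℝ) T := ⟨hx.1, le_of_lt hx.2⟩
        have h1 := (aux_expD 1 x).mul ((hδd x hx').add (hψd x hx'))
        have h2 : (1:ℂ) * Complex.exp ((1:ℂ) * x) * (δ x + ψ x)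
            + Complex.exp ((1:ℂ) * x) * (-(ψ x) + -(δ x)) = 0 := by ring
        exact (h2 ▸ h1).hasDerivWithinAt
      exact fun x hx => constant_of_has_deriv_right_zero hc2 hd2 x hx
    have hSconst : ∀ x ∈ Icc (0:ℝ) T,
        Complex.exp ((-1:ℂ) * x) * (δ x - ψ x)
          = Complex.exp ((-1:ℂ) * (0:ℝ)) * (δ 0 - ψ 0) := by
      have hc2 : ContinuousOn (fun x : ℝ => Complex.exp ((-1:ℂ) * x) * (δ x - ψ x)) (Icc 0 T) :=
        ((aux_expC (-1)).mul (hδcont.sub hψcont)).continuousOn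
      have hd2 : ∀ x ∈ Ico (0:ℝ) T,
          HasDerivWithinAt (fun x : ℝ => Complex.exp ((-1:ℂ) * x) * (δ x - ψ x)) 0 (Ici x) x := by
        intro x hx
        have hx' : x ∈ Icc (0:ℝ) T := ⟨hx.1, le_of_lt hx.2⟩
        have h1 := (aux_expD (-1) x).mul ((hδd x hx').sub (hψd x hx'))
        have h2 : (-1:ℂ) * Complex.exp ((-1:ℂ) * x) * (δ x - ψ x)
            + Complex.exp ((-1:ℂ) * x) * (-(ψ x) - -(δ x)) = 0 := by ring
        exact (h2 ▸ h1).hasDerivWithinAt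
      exact fun x hx => constant_of_has_deriv_right_zero hc2 hd2 x hx
    have hδ0 : δ 0 = 0 := by rw [hδ_def]; simp [hθ₂0, hθ0]
    have hψT : ψ T = 0 := by rw [hψ_def]; simp [hΦ₂T, hΦT]
    have hTT : T ∈ Icc (0:ℝ) T := ⟨hT, le_refl T⟩
    have hden' : Complex.exp ((T:ℝ) : ℂ) + Complex.exp (-((T:ℝ) : ℂ)) ≠ 0 := by
      simpa using hden
    have hRT : Complex.exp ((T:ℝ) : ℂ) * δ T = ψ 0 := by
      have h := hRconst T hTT
      rw [hδ0, hψT] at h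
      simpa using h
    have hST : Complex.exp (-((T:ℝ) : ℂ)) * δ T = -ψ 0 := by
      have h := hSconst T hTT
      rw [hδ0, hψT] at h
      simpa using h
    have hδT : δ T = 0 := by
      have hsum : (Complex.exp ((T:ℝ) : ℂ) + Complex.exp (-((T:ℝ) : ℂ))) * δ T = 0 := by
        linear_combination hRT + hST
      rcases mul_eq_zero.mp hsum with h | h
      · exact absurd h hden'
      · exact h
    have hψ0 : ψ 0 = 0 := by rw [← hRT, hδT, mul_zero]
    have e1 : δ t + ψ t = 0 := by
      have h := hRconst t ht
      rw [hδ0, hψ0, add_zero, mul_zero] at h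
      rcases mul_eq_zero.mp h with h | h
      · exact absurd h (Complex.exp_ne_zero _)
      · exact h
    have e2 : δ t - ψ t = 0 := by
      have h := hSconst t ht
      rw [hδ0, hψ0, sub_zero, mul_zero] at h
      rcases mul_eq_zero.mp h with h | h
      · exact absurd h (Complex.exp_ne_zero _)
      · exact h
    have hδt : δ t = 0 := by linear_combination (e1 + e2) / 2
    simp only [hδ_def] at hδt
    exact sub_eq_zero.mp hδt

theorem stmt_11 (T lam : ℝ) (hT : 0 ≤ T) (g : ℝ → ℂ) (hg : ContinuousOn g (Icc 0 T)) :
    ∃ θ : ℝ → ℂ, ContDiff ℝ 1 θ ∧ θ 0 = 0 ∧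
      (∀ t ∈ Icc 0 T,
        deriv θ t + (∫ s in t..T, Complex.exp (-(Complex.I * (lam : ℂ) * ((s : ℂ) - (t : ℂ)))) *
          (θ s - Complex.I * (lam : ℂ) * deriv θ s)) = g t) ∧
      ∀ θ₂ : ℝ → ℂ, ContDiff ℝ 1 θ₂ → θ₂ 0 = 0 →
        (∀ t ∈ Icc 0 T,
          deriv θ₂ t + (∫ s in t..T, Complex.exp (-(Complex.I * (lam : ℂ) * ((s : ℂ) - (t : ℂ)))) *
            (θ₂ s - Complex.I * (lam : ℂ) * deriv θ₂ s)) = g t) →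
        ∀ t ∈ Icc 0 T, θ₂ t = θ t := by
  set G : ℝ → ℂ := IccExtend hT ((Icc (0:ℝ) T).restrict g) with hG_def
  have hGc : Continuous G := hg.restrict.Icc_extend'
  have hGeq : ∀ x ∈ Icc (0:ℝ) T, G x = g x := by
    intro x hx
    rw [hG_def, IccExtend_of_mem hT _ hx]
    rfl
  obtain ⟨θ, h1, h2, h3, h4⟩ := aux_main T lam hT G hGc
  refine ⟨θ, h1, h2, ?_, ?_⟩
  · intro t ht
    rw [← hGeq t ht]
    exact h3 t ht
  · intro θ₂ a b hheq
    refine h4 θ₂ a b ?_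
    intro t ht
    rw [hGeq t ht]
    exact hheq t ht
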